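/- Let G be a simple graph on a finite vertex set V with |V| = n ≥ 1, let k, u : V → ℕ, and let σ : Fin n ≃ V be any enumeration of V, writing v_i = σ(i). Suppose f : Fin n → ℕ satisfies, for every i, the greedy recursion f(i) = min( u(v_i), min_{w ∈ N[v_i]} ( k(w) ∸ ∑_{j < i, v_j ∈ N[w]} f(j) ) ), where ∸ is truncated subtraction in ℕ (the inner minimum is over the nonempty set N[v_i]). Then the function g : V → ℕ defined by g(v_i) = f(i) is a (k,u)-packing function of G. -/
import Mathlib


open Classical Finset

/-- The closed neighborhood `N[v]` of `v` in `G`, as a finset. -/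
noncomputable def closedNbhd {V : Type*} [Fintype V] (G : SimpleGraph V) (v : V) : Finset V :=
  Finset.univ.filter (fun w => G.Adj v w ∨ w = v)

lemma mem_closedNbhd_self {V : Type*} [Fintype V] (G : SimpleGraph V) (v : V) :
    v ∈ closedNbhd G v := by simp [closedNbhd]

/-- `f` is a `(k,u)`-dominating function of `G`. -/
def IsDomFn {V : Type*} [Fintype V] (G : SimpleGraph V) (k u f : V → ℕ) : Prop :=
  ∀ v, f v ≤ u v ∧ k v ≤ ∑ w ∈ closedNbhd G v, f w

/-- `f` is a `(k,u)`-packing function of `G`. -/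
def IsPackFn {V : Type*} [Fintype V] (G : SimpleGraph V) (k u f : V → ℕ) : Prop :=
  ∀ v, f v ≤ u v ∧ ∑ w ∈ closedNbhd G v, f w ≤ k v

/-- `γ_{k,u}(G)`: minimum weight of a `(k,u)`-dominating function. -/
noncomputable def gammaKU {V : Type*} [Fintype V] (G : SimpleGraph V) (k u : V → ℕ) : ℕ :=
  sInf {s | ∃ f, IsDomFn G k u f ∧ s = ∑ v, f v}

/-- `L_{k,u}(G)`: maximum weight of a `(k,u)`-packing function. -/
noncomputable def LKU {V : Type*} [Fintype V] (G : SimpleGraph V) (k u : V → ℕ) : ℕ :=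
  sSup {s | ∃ f, IsPackFn G k u f ∧ s = ∑ v, f v}

/-- the greedy function produced by the algorithm (processing the
vertices in the order `σ`) is a `(k,u)`-packing function of `G`. -/
theorem stmt_13 {V : Type*} [Fintype V] (G : SimpleGraph V) (k u : V → ℕ)
    (n : ℕ) (hn : 1 ≤ n) (σ : Fin n ≃ V) (f : Fin n → ℕ)
    (hf : ∀ i : Fin n,
      f i = min (u (σ i))
        ((closedNbhd G (σ i)).inf' ⟨σ i, mem_closedNbhd_self G (σ i)⟩
          (fun w => k w -
            ∑ j ∈ Finset.univ.filter (fun j : Fin n => j < i ∧ σ j ∈ closedNbhd G w), f j))) :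
    IsPackFn G k u (fun v => f (σ.symm v)) := by
  have hsymm : ∀ (v w : V), w ∈ closedNbhd G v → v ∈ closedNbhd G w := by
    intro v w h
    simp only [closedNbhd, Finset.mem_filter, Finset.mem_univ, true_and] at h ⊢
    rcases h with h | h
    · exact Or.inl h.symm
    · exact Or.inr h.symm
  intro v
  constructor
  · show f (σ.symm v) ≤ u v
    have := hf (σ.symm v)
    rw [Equiv.apply_symm_apply] at this
    rw [this]; exact min_le_left _ _
  · -- key invariant
    have key : ∀ m : ℕ,
        ∑ j ∈ Finset.univ.filter (fun j : Fin n => (j : ℕ) < m ∧ σ j ∈ closedNbhd G v), f j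
          ≤ k v := by
      intro m
      induction m with
      | zero => simp
      | succ m ih =>
        by_cases hm : m < n
        · set i : Fin n := ⟨m, hm⟩ with hi
          by_cases hP : σ i ∈ closedNbhd G v
          · have hsplit :
                Finset.univ.filter (fun j : Fin n => (j : ℕ) < m + 1 ∧ σ j ∈ closedNbhd G v)
                  = insert i (Finset.univ.filter
                      (fun j : Fin n => (j : ℕ) < m ∧ σ j ∈ closedNbhd G v)) := by
              ext j
              simp only [Finset.mem_filter, Finset.mem_univ, true_and, Finset.mem_insert]
              constructor
              · rintro ⟨hj, hjP⟩
                rcases Nat.lt_succ_iff_lt_or_eq.mp hj with h | h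
                · exact Or.inr ⟨h, hjP⟩
                · left; exact Fin.ext h
              · rintro (rfl | ⟨hj, hjP⟩)
                · exact ⟨Nat.lt_succ_self _, hP⟩
                · exact ⟨Nat.lt_succ_of_lt hj, hjP⟩
            have hni : i ∉ Finset.univ.filter
                (fun j : Fin n => (j : ℕ) < m ∧ σ j ∈ closedNbhd G v) := by
              simp [hi]
            rw [hsplit, Finset.sum_insert hni]
            -- f i ≤ k v - S_m
            have hfi : f i ≤ k v -
                ∑ j ∈ Finset.univ.filter (fun j : Fin n => j < i ∧ σ j ∈ closedNbhd G v), f j := by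
              have := hf i
              rw [this]
              refine le_trans (min_le_right _ _) ?_
              exact Finset.inf'_le _ (hsymm v (σ i) hP)
            have hlt : Finset.univ.filter (fun j : Fin n => j < i ∧ σ j ∈ closedNbhd G v)
                = Finset.univ.filter (fun j : Fin n => (j : ℕ) < m ∧ σ j ∈ closedNbhd G v) := by
              ext j; simp [Fin.lt_def, hi]
            rw [hlt] at hfi
            have := (Nat.le_sub_iff_add_le ih).mp hfi
            omega
          · have heq :
                Finset.univ.filter (fun j : Fin n => (j : ℕ) < m + 1 ∧ σ j ∈ closedNbhd G v)
                  = Finset.univ.filter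
                      (fun j : Fin n => (j : ℕ) < m ∧ σ j ∈ closedNbhd G v) := by
              ext j
              simp only [Finset.mem_filter, Finset.mem_univ, true_and]
              constructor
              · rintro ⟨hj, hjP⟩
                rcases Nat.lt_succ_iff_lt_or_eq.mp hj with h | h
                · exact ⟨h, hjP⟩
                · exact absurd hjP (by rwa [show j = i from Fin.ext h])
              · rintro ⟨hj, hjP⟩; exact ⟨Nat.lt_succ_of_lt hj, hjP⟩
            rw [heq]; exact ih
        · have heq :
              Finset.univ.filter (fun j : Fin n => (j : ℕ) < m + 1 ∧ σ j ∈ closedNbhd G v)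
                = Finset.univ.filter
                    (fun j : Fin n => (j : ℕ) < m ∧ σ j ∈ closedNbhd G v) := by
            ext j
            simp only [Finset.mem_filter, Finset.mem_univ, true_and]
            have : (j : ℕ) < n := j.isLt
            constructor <;> rintro ⟨h1, h2⟩ <;> exact ⟨by omega, h2⟩
          rw [heq]; exact ih
    have hreindex : ∑ w ∈ closedNbhd G v, f (σ.symm w)
        = ∑ j ∈ Finset.univ.filter (fun j : Fin n => (j : ℕ) < n ∧ σ j ∈ closedNbhd G v), f j := by
      have hfilter : Finset.univ.filter (fun j : Fin n => (j : ℕ) < n ∧ σ j ∈ closedNbhd G v)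
          = (closedNbhd G v).image σ.symm := by
        ext j
        simp only [Finset.mem_filter, Finset.mem_univ, true_and, Finset.mem_image]
        constructor
        · rintro ⟨-, hj⟩; exact ⟨σ j, hj, by simp⟩
        · rintro ⟨w, hw, rfl⟩; exact ⟨(σ.symm w).isLt, by simpa using hw⟩
      rw [hfilter, Finset.sum_image (fun a _ b _ h => σ.symm.injective h)]
    simpa [hreindex] using key n
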